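/- Let a, b ∈ ℂ² satisfy |a₁| = |b₁|, |a₂| = |b₂|, |a₁ - a₂| = |b₁ - b₂|, and |a₁ - i·a₂| = |b₁ - i·b₂|. If a₂ ≠ 0, then b₂ ≠ 0 and a₁/a₂ = b₁/b₂. -/

import Mathlib

/-- Under the four magnitude conditions, if `a 1 ≠ 0` then `b 1 ≠ 0` and the
quotients of first over second entries coincide. -/
theorem stmt1 (a b : Fin 2 → ℂ)
    (h1 : ‖a 0‖ = ‖b 0‖)
    (h2 : ‖a 1‖ = ‖b 1‖)
    (h3 : ‖a 0 - a 1‖ = ‖b 0 - b 1‖)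
    (h4 : ‖a 0 - Complex.I * a 1‖ = ‖b 0 - Complex.I * b 1‖)
    (ha : a 1 ≠ 0) :
    b 1 ≠ 0 ∧ a 0 / a 1 = b 0 / b 1 := by
  have hb : b 1 ≠ 0 := by
    intro h
    apply ha
    rw [h, norm_zero, norm_eq_zero] at h2
    exact h2
  refine ⟨hb, ?_⟩
  have e1 : Complex.normSq (a 0) = Complex.normSq (b 0) := by
    rw [← Complex.sq_norm, ← Complex.sq_norm, h1]
  have e2 : Complex.normSq (a 1) = Complex.normSq (b 1) := by
    rw [← Complex.sq_norm, ← Complex.sq_norm, h2]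
  have e3 : Complex.normSq (a 0 - a 1) = Complex.normSq (b 0 - b 1) := by
    rw [← Complex.sq_norm, ← Complex.sq_norm, h3]
  have e4 : Complex.normSq (a 0 - Complex.I * a 1) = Complex.normSq (b 0 - Complex.I * b 1) := by
    rw [← Complex.sq_norm, ← Complex.sq_norm, h4]
  have h1' : a 1 * (starRingEnd ℂ) (a 1) = b 1 * (starRingEnd ℂ) (b 1) := by
    rw [Complex.mul_conj, Complex.mul_conj, e2]
  simp only [Complex.normSq_apply, Complex.sub_re, Complex.sub_im, Complex.mul_re,
    Complex.mul_im, Complex.I_re, Complex.I_im] at e1 e2 e3 e4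
  have key : a 0 * (starRingEnd ℂ) (a 1) = b 0 * (starRingEnd ℂ) (b 1) := by
    apply Complex.ext
    · simp only [Complex.mul_re, Complex.conj_re, Complex.conj_im]
      linear_combination e1 / 2 + e2 / 2 - e3 / 2
    · simp only [Complex.mul_im, Complex.conj_re, Complex.conj_im]
      linear_combination e1 / 2 + e2 / 2 - e4 / 2
  have hca : (starRingEnd ℂ) (a 1) ≠ 0 := by simpa using ha
  have hcb : (starRingEnd ℂ) (b 1) ≠ 0 := by simpa using hb
  rw [div_eq_div_iff ha hb]
  apply mul_right_cancel₀ (mul_ne_zero hca hcb)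
  linear_combination (b 1 * (starRingEnd ℂ) (b 1)) * key -
      (b 0 * (starRingEnd ℂ) (b 1)) * h1'
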